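/- Let λ ≥ 2 and h ≥ 1 be coprime integers, let a : ℕ → ℂ be λ-automatic and multiplicative, and let χ : ℕ → ℂ be a Dirichlet character of modulus hλ such that a(n) = χ(n) for all n ≥ 1 coprime to hλ. Let q be a prime dividing h and set α = ν_q(hλ). Suppose χ_q is a Dirichlet character of modulus q^α and χ' is a Dirichlet character of modulus hλ/q^α with χ(n) = χ_q(n)·χ'(n) for all n, and let m be an integer with m ≡ 1 (mod q^α) and m ≡ q (mod hλ/q^α). Then the sequence n ↦ χ_q(n / q^{ν_q(n)}) · a(q^{ν_q(n)}) / χ(m)^{ν_q(n)} is periodic on the positive integers. -/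

import Mathlib

/-- A sequence `f : ℕ → ℂ` is `lam`-automatic if its `lam`-kernel is finite. -/
def IsAutomatic (lam : ℕ) (f : ℕ → ℂ) : Prop :=
  {g : ℕ → ℂ | ∃ k r : ℕ, r < lam ^ k ∧ g = fun n => f (lam ^ k * n + r)}.Finite

/-- A sequence is multiplicative if `f 1 = 1` and `f (m*n) = f m * f n` for coprime `m n ≥ 1`. -/
def IsMultiplicativeSeq (f : ℕ → ℂ) : Prop :=
  f 1 = 1 ∧ ∀ m n : ℕ, 1 ≤ m → 1 ≤ n → Nat.Coprime m n → f (m * n) = f m * f n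

/-- Eventually periodic sequence. -/
def EventuallyPeriodicSeq (f : ℕ → ℂ) : Prop :=
  ∃ d : ℕ, 1 ≤ d ∧ ∃ n₀ : ℕ, ∀ n ≥ n₀, f (n + d) = f n

/-- A Dirichlet character of modulus `k`: `k`-periodic, completely multiplicative,
and vanishing exactly at arguments not coprime to `k`. -/
def IsDirichletCharacterSeq (k : ℕ) (χ : ℕ → ℂ) : Prop :=
  (∀ n : ℕ, χ (n + k) = χ n) ∧ (∀ m n : ℕ, χ (m * n) = χ m * χ n) ∧
    (∀ n : ℕ, χ n = 0 ↔ 1 < Nat.gcd n k)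

namespace DcharAux

variable {k : ℕ} {χ : ℕ → ℂ}

lemma add_mul (hχ : IsDirichletCharacterSeq k χ) (n t : ℕ) : χ (n + t * k) = χ n := by
  induction t with
  | zero => simp
  | succ t ih =>
    have : n + (t + 1) * k = (n + t * k) + k := by ring
    rw [this, hχ.1, ih]

lemma congr (hχ : IsDirichletCharacterSeq k χ) {x y : ℕ} (hxy : x ≡ y [MOD k]) :
    χ x = χ y := by
  have hx : χ x = χ (x % k) := by
    conv_lhs => rw [← Nat.mod_add_div x k, mul_comm, add_mul hχ]
  have hy : χ y = χ (y % k) := by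
    conv_lhs => rw [← Nat.mod_add_div y k, mul_comm, add_mul hχ]
  rw [hx, hy, hxy]

lemma ne_zero (hχ : IsDirichletCharacterSeq k χ) {x : ℕ} (hx : Nat.Coprime x k) :
    χ x ≠ 0 := by
  intro h0
  rw [hχ.2.2] at h0
  rw [Nat.Coprime] at hx
  omega

lemma one (hχ : IsDirichletCharacterSeq k χ) : χ 1 = 1 := by
  have h1 : χ 1 ≠ 0 := ne_zero hχ (Nat.coprime_one_left k)
  have := hχ.2.1 1 1
  rw [mul_one] at this
  exact mul_right_cancel₀ h1 (by rw [← this, one_mul])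

lemma pow (hχ : IsDirichletCharacterSeq k χ) (x t : ℕ) : χ (x ^ t) = χ x ^ t := by
  induction t with
  | zero => simpa using one hχ
  | succ t ih => rw [pow_succ, pow_succ, hχ.2.1, ih]

end DcharAux

/-- coprimality only depends on the residue class -/
lemma coprime_of_modEq {x y n : ℕ} (hxy : x ≡ y [MOD n]) (hy : Nat.Coprime y n) :
    Nat.Coprime x n := by
  rcases Nat.eq_zero_or_pos n with rfl | hn
  · have : x = y := by simpa [Nat.ModEq] using hxy
    rw [this]; exact hy
  have hx' : Nat.gcd x n = Nat.gcd (x % n) n := by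
    rw [Nat.gcd_comm x n, Nat.gcd_rec n x, Nat.gcd_comm]
  have hy' : Nat.gcd y n = Nat.gcd (y % n) n := by
    rw [Nat.gcd_comm y n, Nat.gcd_rec n y, Nat.gcd_comm]
  unfold Nat.Coprime at *
  rw [hx', hxy, ← hy']
  exact hy

theorem stmt_13 (lam h : ℕ) (hlam : 2 ≤ lam) (hh : 1 ≤ h)
    (hcop : Nat.Coprime h lam)
    (a : ℕ → ℂ) (haut : IsAutomatic lam a) (ha : IsMultiplicativeSeq a)
    (χ : ℕ → ℂ) (hχ : IsDirichletCharacterSeq (h * lam) χ)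
    (haχ : ∀ n : ℕ, 1 ≤ n → Nat.Coprime n (h * lam) → a n = χ n)
    (q : ℕ) (hq : q.Prime) (hqh : q ∣ h)
    (α : ℕ) (hα : α = padicValNat q (h * lam))
    (χq : ℕ → ℂ) (hχq : IsDirichletCharacterSeq (q ^ α) χq)
    (χ' : ℕ → ℂ) (hχ' : IsDirichletCharacterSeq ((h * lam) / q ^ α) χ')
    (hsplit : ∀ n : ℕ, χ n = χq n * χ' n)
    (m : ℕ) (hm1 : m ≡ 1 [MOD q ^ α]) (hm2 : m ≡ q [MOD (h * lam) / q ^ α]) :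
    ∃ d : ℕ, 1 ≤ d ∧ ∀ n : ℕ, 1 ≤ n →
      χq ((n + d) / q ^ padicValNat q (n + d)) * a (q ^ padicValNat q (n + d)) /
          (χ m) ^ padicValNat q (n + d) =
        χq (n / q ^ padicValNat q n) * a (q ^ padicValNat q n) /
          (χ m) ^ padicValNat q n := by
  haveI : Fact q.Prime := ⟨hq⟩
  have hq2 : 2 ≤ q := hq.two_le
  have hq0 : q ≠ 0 := by omega
  set M := h * lam with hMdef
  have hM0 : M ≠ 0 := by positivity
  have hqlam : Nat.Coprime q lam := Nat.Coprime.coprime_dvd_left hqh hcop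
  have hqM : q ∣ M := dvd_mul_of_dvd_left hqh lam
  have hα1 : 1 ≤ α := by
    rw [hα]
    exact one_le_padicValNat_of_dvd (by positivity) hqM
  set M' := M / q ^ α with hM'def
  have hQdvd : q ^ α ∣ M := by
    rw [hα]; exact pow_padicValNat_dvd
  have hQM : q ^ α * M' = M := Nat.mul_div_cancel' hQdvd
  have hqM' : Nat.Coprime q M' := by
    have := Nat.coprime_ordCompl hq hM0
    rwa [Nat.factorization_def M hq, ← hα] at this
  have hM'0 : M' ≠ 0 := by
    intro h0; rw [h0, mul_zero] at hQM; exact hM0 hQM.symm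
  -- the auxiliary multiplier u ≡ 1 (mod M)
  set u := M + 1 with hudef
  have hu1M : u ≡ 1 [MOD M] := Nat.add_modEq_left
  have hu1M' : u ≡ 1 [MOD M'] := hu1M.of_dvd ⟨q ^ α, by rw [← hQM]; ring⟩
  have hu1q : u ≡ 1 [MOD q] := hu1M.of_dvd hqM
  have huM' : Nat.Coprime u M' := coprime_of_modEq hu1M' (Nat.coprime_one_left _)
  have huq : ¬ q ∣ u := by
    intro hd
    have h1 : (1 : ℕ) ≡ 0 [MOD q] := ((Nat.modEq_zero_iff_dvd.mpr hd).symm.trans hu1q).symm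
    have h2 := Nat.modEq_zero_iff_dvd.mp h1
    have := Nat.dvd_one.mp h2
    omega
  have hu0 : u ≠ 0 := by omega
  -- E = χ' q = χ m
  set E := χ' q with hEdef
  have hE0 : E ≠ 0 := DcharAux.ne_zero hχ' hqM'
  have hχmE : χ m = E := by
    rw [hsplit m, DcharAux.congr hχq hm1, DcharAux.one hχq, one_mul,
      DcharAux.congr hχ' hm2]
  -- pigeonhole on the kernel
  have hlt : ∀ k : ℕ, q ^ k * u < lam ^ (q ^ k * u) := by
    intro k
    calc q ^ k * u < 2 ^ (q ^ k * u) := Nat.lt_two_pow_self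
    _ ≤ lam ^ (q ^ k * u) := Nat.pow_le_pow_left hlam _
  obtain ⟨k, k', hkk', hker⟩ : ∃ k k' : ℕ, k < k' ∧ ∀ n : ℕ,
      a (lam ^ (q ^ k * u) * n + q ^ k * u) = a (lam ^ (q ^ k' * u) * n + q ^ k' * u) := by
    have hmaps : Set.MapsTo (fun k : ℕ => (fun n : ℕ => a (lam ^ (q ^ k * u) * n + q ^ k * u)))
        Set.univ {g : ℕ → ℂ | ∃ kk r : ℕ, r < lam ^ kk ∧ g = fun n => a (lam ^ kk * n + r)} :=
      fun k _ => ⟨q ^ k * u, q ^ k * u, hlt k, rfl⟩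
    obtain ⟨k₁, -, k₂, -, hne, hFeq⟩ :=
      Set.infinite_univ.exists_ne_map_eq_of_mapsTo hmaps haut
    rcases hne.lt_or_gt with hlt' | hlt'
    · exact ⟨k₁, k₂, hlt', fun n => congrFun hFeq n⟩
    · exact ⟨k₂, k₁, hlt', fun n => (congrFun hFeq n).symm⟩
  set e : ℕ := q ^ k * u with hedef
  set e' : ℕ := q ^ k' * u with he'def
  have hee' : e ≤ e' := by
    apply Nat.mul_le_mul_right
    exact Nat.pow_le_pow_right (by omega) hkk'.le
  set δ : ℕ := e' - e with hδdef
  have hδe : e + δ = e' := by omega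
  set Δ : ℕ := k' - k with hΔdef
  have hΔk : k + Δ = k' := by omega
  have hΔ1 : 1 ≤ Δ := by omega
  set K₀ : ℕ := k' + α with hK₀def
  -- main construction
  have inst : ∀ K : ℕ, K₀ ≤ K → ∀ v : ℕ, ¬ q ∣ v → ∃ C : ℕ, ¬ q ∣ C ∧
      ((C : ℤ) ≡ (u : ℤ) * ((q : ℤ) ^ Δ - (lam : ℤ) ^ δ) [ZMOD ((q : ℤ) ^ α)]) ∧
      χq v * a (q ^ K) * E ^ (2 * k) = a (q ^ k) * χq C * E ^ (k' + K) := by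
    intro K hK v hv
    have hkK : k + α ≤ K := by omega
    have hkK' : k ≤ K := by omega
    set R := q ^ (K + α) with hRdef
    have hR0 : R ≠ 0 := pow_ne_zero _ hq0
    haveI : NeZero R := ⟨hR0⟩
    have hlamR : Nat.Coprime (lam ^ e) R := Nat.Coprime.pow _ _ hqlam.symm
    have hM'R : Nat.Coprime M' R := Nat.Coprime.pow_right _ hqM'.symm
    -- construct n by CRT
    set ζ : ZMod R := ((lam ^ e : ℕ) : ZMod R)⁻¹ *
      ((q : ZMod R) ^ K * (v : ZMod R) - (q : ZMod R) ^ k * (u : ZMod R)) with hζdef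
    set nn : ℕ := M' * (((M' : ℕ) : ZMod R)⁻¹ * ζ).val with hnndef
    have hM'nn : M' ∣ nn := ⟨_, rfl⟩
    set X : ℕ := lam ^ e * nn + q ^ k * u with hXdef
    have hXc : ((X : ℕ) : ZMod R) = (q : ZMod R) ^ K * (v : ZMod R) := by
      have h1 : ((M' : ℕ) : ZMod R) * ((M' : ℕ) : ZMod R)⁻¹ = 1 :=
        ZMod.coe_mul_inv_eq_one M' hM'R
      have h2 : ((lam ^ e : ℕ) : ZMod R) * ((lam ^ e : ℕ) : ZMod R)⁻¹ = 1 :=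
        ZMod.coe_mul_inv_eq_one (lam ^ e) hlamR
      push_cast at h2
      have h3 := ZMod.natCast_rightInverse (n := R) (((M' : ℕ) : ZMod R)⁻¹ * ζ)
      have hnnc : ((nn : ℕ) : ZMod R) = ζ := by
        rw [hnndef, Nat.cast_mul, h3, ← mul_assoc, h1, one_mul]
      rw [hXdef]
      push_cast
      rw [hnnc, hζdef]
      push_cast
      linear_combination ((q : ZMod R) ^ K * (v : ZMod R) -
        (q : ZMod R) ^ k * (u : ZMod R)) * h2
    have hmodR : X ≡ q ^ K * v [MOD R] := by
      rw [← ZMod.natCast_eq_natCast_iff]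
      rw [hXc]
      push_cast
      ring
    obtain ⟨t, ht⟩ : ∃ t : ℤ, (X : ℤ) = (q : ℤ) ^ K * (v : ℤ) + (q : ℤ) ^ (K + α) * t := by
      obtain ⟨t0, ht0⟩ := Nat.modEq_iff_dvd.mp hmodR
      refine ⟨-t0, ?_⟩
      have hRc : ((R : ℕ) : ℤ) = (q : ℤ) ^ (K + α) := by rw [hRdef]; push_cast; ring
      rw [hRc] at ht0
      push_cast at ht0 ⊢
      linear_combination -ht0
    have hqKX : q ^ K ∣ X := by
      have : ((q ^ K : ℕ) : ℤ) ∣ (X : ℤ) := by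
        refine ⟨(v : ℤ) + (q : ℤ) ^ α * t, ?_⟩
        push_cast
        rw [ht]
        ring
      exact_mod_cast this
    set B := X / q ^ K with hBdef
    have hXB : q ^ K * B = X := Nat.mul_div_cancel' hqKX
    have hBZ : (B : ℤ) = (v : ℤ) + (q : ℤ) ^ α * t := by
      have hc : (q : ℤ) ^ K * (B : ℤ) = (X : ℤ) := by exact_mod_cast hXB
      rw [ht] at hc
      have hqK0 : ((q : ℤ) ^ K) ≠ 0 := by positivity
      apply mul_left_cancel₀ hqK0
      rw [hc]
      ring
    have hBv : B ≡ v [MOD q ^ α] := by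
      rw [Nat.modEq_iff_dvd]
      refine ⟨-t, ?_⟩
      push_cast
      rw [hBZ]
      ring
    have hqB : ¬ q ∣ B := by
      intro hd
      apply hv
      have h1 : (q : ℤ) ∣ (B : ℤ) := by exact_mod_cast hd
      have h2 : (q : ℤ) ∣ (v : ℤ) := by
        have : (v : ℤ) = (B : ℤ) - (q : ℤ) ^ α * t := by rw [hBZ]; ring
        rw [this]
        exact dvd_sub h1 ((dvd_pow_self (q : ℤ) (by omega : α ≠ 0)).mul_right t)
      exact_mod_cast h2
    have hB0 : B ≠ 0 := fun h0 => hqB (h0 ▸ dvd_zero q)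
    -- the other side
    set AR : ℕ := lam ^ e' * nn + q ^ k' * u with hARdef
    have hkern : a X = a AR := hker nn
    have hARZ : (AR : ℤ) = (lam : ℤ) ^ δ * (X : ℤ) + (q : ℤ) ^ k' * (u : ℤ) -
        (lam : ℤ) ^ δ * (q : ℤ) ^ k * (u : ℤ) := by
      have hle : (lam : ℤ) ^ e' = (lam : ℤ) ^ δ * (lam : ℤ) ^ e := by
        rw [← pow_add, add_comm, hδe]
      rw [hARdef, hXdef]
      push_cast
      rw [hle]
      ring
    have hqkAR : q ^ k ∣ AR := by
      have : ((q ^ k : ℕ) : ℤ) ∣ (AR : ℤ) := by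
        refine ⟨(lam : ℤ) ^ δ * (q : ℤ) ^ (K - k) * (B : ℤ) + (q : ℤ) ^ Δ * (u : ℤ) -
          (lam : ℤ) ^ δ * (u : ℤ), ?_⟩
        have hX' : (X : ℤ) = (q : ℤ) ^ k * ((q : ℤ) ^ (K - k) * (B : ℤ)) := by
          have hc : (q : ℤ) ^ K * (B : ℤ) = (X : ℤ) := by exact_mod_cast hXB
          rw [← hc, ← mul_assoc, ← pow_add]
          congr 2
          omega
        have hk' : (q : ℤ) ^ k' = (q : ℤ) ^ k * (q : ℤ) ^ Δ := by
          rw [← pow_add, hΔk]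
        rw [hARZ, hX', hk']
        push_cast
        ring
      exact_mod_cast this
    set C := AR / q ^ k with hCdef
    have hARC : q ^ k * C = AR := Nat.mul_div_cancel' hqkAR
    have hCZ : (C : ℤ) = (lam : ℤ) ^ δ * (q : ℤ) ^ (K - k) * (B : ℤ) +
        (q : ℤ) ^ Δ * (u : ℤ) - (lam : ℤ) ^ δ * (u : ℤ) := by
      have hc : (q : ℤ) ^ k * (C : ℤ) = (AR : ℤ) := by exact_mod_cast hARC
      have hX' : (X : ℤ) = (q : ℤ) ^ k * ((q : ℤ) ^ (K - k) * (B : ℤ)) := by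
        have hc2 : (q : ℤ) ^ K * (B : ℤ) = (X : ℤ) := by exact_mod_cast hXB
        rw [← hc2, ← mul_assoc, ← pow_add]
        congr 2
        omega
      have hk' : (q : ℤ) ^ k' = (q : ℤ) ^ k * (q : ℤ) ^ Δ := by
        rw [← pow_add, hΔk]
      rw [hARZ, hX', hk'] at hc
      have hqk0 : ((q : ℤ) ^ k) ≠ 0 := by positivity
      apply mul_left_cancel₀ hqk0
      rw [hc]
      ring
    have hCmod : (C : ℤ) ≡ (u : ℤ) * ((q : ℤ) ^ Δ - (lam : ℤ) ^ δ) [ZMOD ((q : ℤ) ^ α)] := by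
      rw [Int.modEq_iff_dvd]
      refine ⟨-((lam : ℤ) ^ δ * (q : ℤ) ^ (K - k - α) * (B : ℤ)), ?_⟩
      have hsplitpow : (q : ℤ) ^ (K - k) = (q : ℤ) ^ α * (q : ℤ) ^ (K - k - α) := by
        rw [← pow_add]
        congr 1
        omega
      rw [hCZ, hsplitpow]
      ring
    have hqC : ¬ q ∣ C := by
      intro hd
      have h1 : (q : ℤ) ∣ (C : ℤ) := by exact_mod_cast hd
      have h2 : (q : ℤ) ∣ (lam : ℤ) ^ δ * (u : ℤ) := by
        have heq : (lam : ℤ) ^ δ * (u : ℤ) = (lam : ℤ) ^ δ * (q : ℤ) ^ (K - k) * (B : ℤ) +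
            (q : ℤ) ^ Δ * (u : ℤ) - (C : ℤ) := by rw [hCZ]; ring
        rw [heq]
        have e1 : (q : ℤ) ^ (K - k) = (q : ℤ) * (q : ℤ) ^ (K - k - 1) := by
          rw [← pow_succ']
          congr 1
          omega
        have e2 : (q : ℤ) ^ Δ = (q : ℤ) * (q : ℤ) ^ (Δ - 1) := by
          rw [← pow_succ']
          congr 1
          omega
        obtain ⟨c, hc⟩ := h1
        refine ⟨(lam : ℤ) ^ δ * (q : ℤ) ^ (K - k - 1) * (B : ℤ) +
          (q : ℤ) ^ (Δ - 1) * (u : ℤ) - c, ?_⟩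
        rw [e1, e2, hc]
        ring
      have h3 : q ∣ lam ^ δ * u := by exact_mod_cast h2
      rcases (Nat.Prime.dvd_mul hq).mp h3 with h4 | h4
      · have := hq.dvd_of_dvd_pow h4
        have hg : Nat.gcd q lam = q := Nat.gcd_eq_left this
        rw [Nat.Coprime] at hqlam
        omega
      · exact huq h4
    have hC0 : C ≠ 0 := fun h0 => hqC (h0 ▸ dvd_zero q)
    -- congruences mod M'
    have hXM' : X ≡ q ^ k * u [MOD M'] := by
      have hle : q ^ k * u ≤ X := Nat.le_add_left _ _
      rw [Nat.ModEq.comm, Nat.modEq_iff_dvd' hle]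
      rw [hXdef, Nat.add_sub_cancel]
      obtain ⟨s, hs⟩ := hM'nn
      exact ⟨lam ^ e * s, by rw [hs]; ring⟩
    have hARM' : AR ≡ q ^ k' * u [MOD M'] := by
      have hle : q ^ k' * u ≤ AR := Nat.le_add_left _ _
      rw [Nat.ModEq.comm, Nat.modEq_iff_dvd' hle]
      rw [hARdef, Nat.add_sub_cancel]
      obtain ⟨s, hs⟩ := hM'nn
      exact ⟨lam ^ e' * s, by rw [hs]; ring⟩
    -- χ' values
    have hχ'u : χ' u = 1 := by rw [DcharAux.congr hχ' hu1M', DcharAux.one hχ']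
    have hχ'X : E ^ K * χ' B = E ^ k := by
      have h1 : χ' X = χ' (q ^ k * u) := DcharAux.congr hχ' hXM'
      have h2 : χ' (q ^ k * u) = E ^ k := by
        rw [hχ'.2.1, DcharAux.pow hχ', hχ'u, mul_one, hEdef]
      have h3 : χ' X = E ^ K * χ' B := by
        rw [← hXB, hχ'.2.1, DcharAux.pow hχ', hEdef]
      rw [← h3, h1, h2]
    have hχ'AR : E ^ k * χ' C = E ^ k' := by
      have h1 : χ' AR = χ' (q ^ k' * u) := DcharAux.congr hχ' hARM'
      have h2 : χ' (q ^ k' * u) = E ^ k' := by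
        rw [hχ'.2.1, DcharAux.pow hχ', hχ'u, mul_one, hEdef]
      have h3 : χ' AR = E ^ k * χ' C := by
        rw [← hARC, hχ'.2.1, DcharAux.pow hχ', hEdef]
      rw [← h3, h1, h2]
    -- coprimality of B, C with M
    have hcopqku : Nat.Coprime (q ^ k * u) M' :=
      Nat.Coprime.mul (Nat.Coprime.pow_left _ hqM') (huM')
    have hcopqk'u : Nat.Coprime (q ^ k' * u) M' :=
      Nat.Coprime.mul (Nat.Coprime.pow_left _ hqM') (huM')
    have hBM' : Nat.Coprime B M' := by
      have hX' : Nat.Coprime X M' := coprime_of_modEq hXM' hcopqku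
      rw [← hXB] at hX'
      exact Nat.Coprime.coprime_dvd_left (Dvd.intro_left _ rfl) hX'
    have hCM' : Nat.Coprime C M' := by
      have hA' : Nat.Coprime AR M' := coprime_of_modEq hARM' hcopqk'u
      rw [← hARC] at hA'
      exact Nat.Coprime.coprime_dvd_left (Dvd.intro_left _ rfl) hA'
    have hBq : Nat.Coprime B (q ^ α) :=
      Nat.Coprime.pow_right _ (((Nat.Prime.coprime_iff_not_dvd hq).mpr hqB).symm)
    have hCq : Nat.Coprime C (q ^ α) :=
      Nat.Coprime.pow_right _ (((Nat.Prime.coprime_iff_not_dvd hq).mpr hqC).symm)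
    have hBM : Nat.Coprime B M := by
      rw [← hQM]
      exact Nat.Coprime.mul_right hBq hBM'
    have hCM : Nat.Coprime C M := by
      rw [← hQM]
      exact Nat.Coprime.mul_right hCq hCM'
    -- evaluate a on both sides
    have haX : a X = a (q ^ K) * (χq v * χ' B) := by
      rw [← hXB, ha.2 _ _ (Nat.one_le_iff_ne_zero.mpr (pow_ne_zero _ hq0))
        (Nat.one_le_iff_ne_zero.mpr hB0) (Nat.Coprime.pow_left _
          ((Nat.Prime.coprime_iff_not_dvd hq).mpr hqB)),
        haχ B (Nat.one_le_iff_ne_zero.mpr hB0) hBM, hsplit B,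
        DcharAux.congr hχq hBv]
    have haAR : a AR = a (q ^ k) * (χq C * χ' C) := by
      rw [← hARC, ha.2 _ _ (Nat.one_le_iff_ne_zero.mpr (pow_ne_zero _ hq0))
        (Nat.one_le_iff_ne_zero.mpr hC0) (Nat.Coprime.pow_left _
          ((Nat.Prime.coprime_iff_not_dvd hq).mpr hqC)),
        haχ C (Nat.one_le_iff_ne_zero.mpr hC0) hCM, hsplit C]
    have eq1 : a (q ^ K) * (χq v * χ' B) = a (q ^ k) * (χq C * χ' C) := by
      rw [← haX, ← haAR, hkern]
    refine ⟨C, hqC, hCmod, ?_⟩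
    linear_combination (E ^ k * E ^ K) * eq1 - (χq v * a (q ^ K) * E ^ k) * hχ'X +
      (a (q ^ k) * χq C * E ^ K) * hχ'AR
  -- uniformization
  have key : ∀ K : ℕ, K₀ ≤ K → ∀ v : ℕ, ¬ q ∣ v →
      χq v * a (q ^ K) * E ^ K₀ = χq 1 * a (q ^ K₀) * E ^ K := by
    intro K hK v hv
    obtain ⟨C, hqC, hCm, hCeq⟩ := inst K hK v hv
    obtain ⟨C₀, hqC₀, hC₀m, hC₀eq⟩ := inst K₀ le_rfl 1 (by
      intro hd; have := Nat.dvd_one.mp hd; omega)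
    have hCC₀ : χq C = χq C₀ := by
      apply DcharAux.congr hχq
      have hint : (C : ℤ) ≡ (C₀ : ℤ) [ZMOD ((q : ℤ) ^ α)] := hCm.trans hC₀m.symm
      rw [Nat.modEq_iff_dvd]
      have := hint.dvd
      push_cast
      exact_mod_cast this
    rw [← hCC₀] at hC₀eq
    have hmul : (χq v * a (q ^ K) * E ^ K₀) * E ^ (2 * k) =
        (χq 1 * a (q ^ K₀) * E ^ K) * E ^ (2 * k) := by
      linear_combination E ^ K₀ * hCeq - E ^ K * hC₀eq
    exact mul_right_cancel₀ (pow_ne_zero _ hE0) hmul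
  -- final assembly
  refine ⟨q ^ (K₀ + α), Nat.one_le_iff_ne_zero.mpr (pow_ne_zero _ hq0), ?_⟩
  intro n hn
  rw [hχmE]
  set d := q ^ (K₀ + α) with hddef
  have hn0 : n ≠ 0 := by omega
  have hnd0 : n + d ≠ 0 := by positivity
  set j := padicValNat q n with hjdef
  have hjn : q ^ j ∣ n := pow_padicValNat_dvd
  have hqn' : ¬ q ∣ n / q ^ j := by
    have := Nat.not_dvd_ordCompl hq hn0
    rwa [Nat.factorization_def n hq, ← hjdef] at this
  by_cases hK₀j : K₀ ≤ j
  · -- large valuation: both sides equal the same constant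
    set j₂ := padicValNat q (n + d) with hj₂def
    have hj₂ : K₀ ≤ j₂ := by
      have h1 : q ^ K₀ ∣ n := dvd_trans (pow_dvd_pow q hK₀j) hjn
      have h2 : q ^ K₀ ∣ d := pow_dvd_pow q (by omega)
      have h3 : q ^ K₀ ∣ n + d := Dvd.dvd.add h1 h2
      rw [hj₂def]
      exact (padicValNat_dvd_iff_le hnd0).mp h3
    have hqm' : ¬ q ∣ (n + d) / q ^ j₂ := by
      have := Nat.not_dvd_ordCompl hq hnd0
      rwa [Nat.factorization_def (n + d) hq, ← hj₂def] at this
    have k1 := key j hK₀j (n / q ^ j) hqn'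
    have k2 := key j₂ hj₂ ((n + d) / q ^ j₂) hqm'
    rw [div_eq_div_iff (pow_ne_zero _ hE0) (pow_ne_zero _ hE0)]
    have hmul : (χq ((n + d) / q ^ j₂) * a (q ^ j₂) * E ^ j) * E ^ K₀ =
        (χq (n / q ^ j) * a (q ^ j) * E ^ j₂) * E ^ K₀ := by
      linear_combination E ^ j * k2 - E ^ j₂ * k1
    exact mul_right_cancel₀ (pow_ne_zero _ hE0) hmul
  · -- small valuation: valuation and residue are unchanged
    push_neg at hK₀j
    have hd1 : q ^ (j + 1) ∣ d := pow_dvd_pow q (by omega)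
    have hj1n : ¬ q ^ (j + 1) ∣ n := by
      rw [padicValNat_dvd_iff_le hn0]
      omega
    have hjd : q ^ j ∣ d := pow_dvd_pow q (by omega)
    have hjnd : q ^ j ∣ n + d := Dvd.dvd.add hjn hjd
    have hj₂ : padicValNat q (n + d) = j := by
      apply le_antisymm
      · by_contra hc
        push_neg at hc
        have : q ^ (j + 1) ∣ n + d := (padicValNat_dvd_iff_le hnd0).mpr hc
        have : q ^ (j + 1) ∣ n := by
          have h4 := Nat.dvd_sub this hd1
          rwa [Nat.add_sub_cancel] at h4
        exact hj1n this
      · exact (padicValNat_dvd_iff_le hnd0).mp hjnd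
    obtain ⟨n₁, hn₁⟩ := hjn
    set D := q ^ (K₀ + α - j) with hDdef
    have hdD : d = q ^ j * D := by
      rw [hddef, hDdef, ← pow_add]
      congr 1
      omega
    have hq1 : n / q ^ j = n₁ := by
      rw [hn₁, Nat.mul_div_cancel_left _ (by positivity)]
    have hq2' : (n + d) / q ^ j = n₁ + D := by
      rw [hn₁, hdD, ← Nat.mul_add, Nat.mul_div_cancel_left _ (by positivity)]
    have hχqeq : χq (n₁ + D) = χq n₁ := by
      have hD' : D = q ^ (K₀ - j) * q ^ α := by
        rw [hDdef, ← pow_add]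
        congr 1
        omega
      rw [hD']
      exact DcharAux.add_mul hχq n₁ (q ^ (K₀ - j))
    rw [hj₂, hq1, hq2', hχqeq]
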